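/- arXiv:1905.02280 — 3 statements merged into one kernel-verified Lean document; each statement's English description precedes it below -/
import Mathlib

section
/- The function C(z,t) = (C0/2)[erfc((Rz - vt)/(2*sqrt(R*D*t))) + exp(v*z/D)*erfc((Rz + vt)/(2*sqrt(R*D*t)))] satisfies the 1-D advection–diffusion–retardation equation R*∂C/∂t = D*∂²C/∂z² - v*∂C/∂z for all z > 0, t > 0, where D > 0, R > 0. -/
/-- The complementary error function `erfc x = (2/√π) ∫ₓ^∞ e^{-s²} ds`. -/
noncomputable def erfc (x : ℝ) : ℝ :=
  (2 / Real.sqrt Real.pi) * ∫ s in Set.Ioi x, Real.exp (-s ^ 2)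

open MeasureTheory in
lemma hasDerivAt_erfc (x : ℝ) :
    HasDerivAt erfc (-(2 / Real.sqrt Real.pi * Real.exp (-x ^ 2))) x := by
  have hint : Integrable (fun s : ℝ => Real.exp (-s ^ 2)) := by
    simpa using integrable_exp_neg_mul_sq (one_pos (α := ℝ))
  have hcont : Continuous (fun s : ℝ => Real.exp (-s ^ 2)) := by continuity
  have hG : ∀ y : ℝ, (∫ s in Set.Ioi y, Real.exp (-s ^ 2)) =
      (∫ s, Real.exp (-s ^ 2)) -
        ((∫ s in Set.Iic (0:ℝ), Real.exp (-s ^ 2)) + ∫ s in (0:ℝ)..y, Real.exp (-s ^ 2)) := by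
    intro y
    have h1 := intervalIntegral.integral_Iic_add_Ioi (b := y)
      (hint.integrableOn) (hint.integrableOn)
    have h2 := intervalIntegral.integral_Iic_sub_Iic (a := (0:ℝ)) (b := y)
      (f := fun s : ℝ => Real.exp (-s ^ 2)) (μ := volume)
      (hint.integrableOn) (hint.integrableOn)
    linarith [h1, h2]
  have hftc : HasDerivAt (fun y => ∫ s in (0:ℝ)..y, Real.exp (-s ^ 2))
      (Real.exp (-x ^ 2)) x :=
    intervalIntegral.integral_hasDerivAt_right hint.intervalIntegrable
      (hcont.stronglyMeasurableAtFilter _ _) hcont.continuousAt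
  have : HasDerivAt (fun y => (2 / Real.sqrt Real.pi) * ∫ s in Set.Ioi y, Real.exp (-s ^ 2))
      (-(2 / Real.sqrt Real.pi * Real.exp (-x ^ 2))) x := by
    have h := ((hftc.const_add (∫ s in Set.Iic (0:ℝ), Real.exp (-s ^ 2))).const_sub
      (∫ s, Real.exp (-s ^ 2))).const_mul (2 / Real.sqrt Real.pi)
    simp only [← hG] at h
    exact h.congr_deriv (by ring)
  exact this


/-- The Ogata–Banks solution satisfies the 1-D advection–diffusion–retardation
equation `R ∂C/∂t = D ∂²C/∂z² - v ∂C/∂z` for all `z > 0`, `t > 0`. -/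
theorem ogata_banks_solves_ADRE (C0 v D R : ℝ) (hD : 0 < D) (hR : 0 < R)
    (C : ℝ → ℝ → ℝ)
    (hC : ∀ z t, C z t = (C0 / 2) *
      (erfc ((R * z - v * t) / (2 * Real.sqrt (R * D * t))) +
        Real.exp (v * z / D) * erfc ((R * z + v * t) / (2 * Real.sqrt (R * D * t))))) :
    ∀ z t : ℝ, 0 < z → 0 < t →
      R * deriv (fun τ => C z τ) t =
        D * deriv (fun ζ => deriv (fun ξ => C ξ t) ζ) z
          - v * deriv (fun ζ => C ζ t) z := by
  intro z t hz ht
  have hDt : (0:ℝ) < R * D * t := by positivity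
  set s : ℝ := Real.sqrt (R * D * t) with hs_def
  have hs : (0:ℝ) < s := Real.sqrt_pos.mpr hDt
  have hs2 : s ^ 2 = R * D * t := Real.sq_sqrt hDt.le
  -- spatial part: fixed t
  have hfun : (fun ξ => C ξ t) = fun ξ => C0 / 2 *
      (erfc ((R * ξ - v * t) / (2 * s)) +
        Real.exp (v * ξ / D) * erfc ((R * ξ + v * t) / (2 * s))) := by
    funext ξ; rw [hC ξ t]
  have h1 : ∀ x : ℝ, HasDerivAt (fun ξ : ℝ => (R * ξ - v * t) / (2 * s)) (R / (2 * s)) x := by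
    intro x
    have := (((hasDerivAt_id' (𝕜 := ℝ) (x := x)).const_mul R).sub_const (v * t)).div_const (2 * s)
    exact this.congr_deriv (by ring)
  have h2 : ∀ x : ℝ, HasDerivAt (fun ξ : ℝ => (R * ξ + v * t) / (2 * s)) (R / (2 * s)) x := by
    intro x
    have := (((hasDerivAt_id' (𝕜 := ℝ) (x := x)).const_mul R).add_const (v * t)).div_const (2 * s)
    exact this.congr_deriv (by ring)
  have hA : ∀ x : ℝ, HasDerivAt (fun ξ => erfc ((R * ξ - v * t) / (2 * s)))
      (-(2 / Real.sqrt Real.pi * Real.exp (-((R * x - v * t) / (2 * s)) ^ 2)) * (R / (2 * s))) x :=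
    fun x => (hasDerivAt_erfc _).comp x (h1 x)
  have hB : ∀ x : ℝ, HasDerivAt (fun ξ => erfc ((R * ξ + v * t) / (2 * s)))
      (-(2 / Real.sqrt Real.pi * Real.exp (-((R * x + v * t) / (2 * s)) ^ 2)) * (R / (2 * s))) x :=
    fun x => (hasDerivAt_erfc _).comp x (h2 x)
  have hE : ∀ x : ℝ, HasDerivAt (fun ξ : ℝ => Real.exp (v * ξ / D))
      (Real.exp (v * x / D) * (v / D)) x := by
    intro x
    have hi : HasDerivAt (fun ξ : ℝ => v * ξ / D) (v / D) x := by
      have := ((hasDerivAt_id' (𝕜 := ℝ) (x := x)).const_mul v).div_const D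
      exact this.congr_deriv (by ring)
    exact hi.exp
  -- first z-derivative, at every point
  have hg : ∀ ζ : ℝ, HasDerivAt (fun ξ => C ξ t)
      (C0 / 2 *
        (-(2 / Real.sqrt Real.pi * Real.exp (-((R * ζ - v * t) / (2 * s)) ^ 2)) * (R / (2 * s)) +
          (Real.exp (v * ζ / D) * (v / D) * erfc ((R * ζ + v * t) / (2 * s)) +
            Real.exp (v * ζ / D) *
              (-(2 / Real.sqrt Real.pi * Real.exp (-((R * ζ + v * t) / (2 * s)) ^ 2)) *
                (R / (2 * s)))))) ζ := by
    intro ζ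
    rw [hfun]
    exact ((hA ζ).add ((hE ζ).mul (hB ζ))).const_mul (C0 / 2)
  have hEq : (fun ζ => deriv (fun ξ => C ξ t) ζ) = fun ζ =>
      C0 / 2 *
        (-(2 / Real.sqrt Real.pi * Real.exp (-((R * ζ - v * t) / (2 * s)) ^ 2)) * (R / (2 * s)) +
          (Real.exp (v * ζ / D) * (v / D) * erfc ((R * ζ + v * t) / (2 * s)) +
            Real.exp (v * ζ / D) *
              (-(2 / Real.sqrt Real.pi * Real.exp (-((R * ζ + v * t) / (2 * s)) ^ 2)) *
                (R / (2 * s))))) :=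
    funext fun ζ => (hg ζ).deriv
  -- second z-derivative at z
  have hEA : HasDerivAt (fun ζ : ℝ => Real.exp (-((R * ζ - v * t) / (2 * s)) ^ 2))
      (Real.exp (-((R * z - v * t) / (2 * s)) ^ 2) *
        (-(2 * ((R * z - v * t) / (2 * s)) * (R / (2 * s))))) z := by
    have := (((h1 z).pow 2).neg).exp
    exact this.congr_deriv (by simp only [Pi.neg_apply, Pi.pow_apply]; push_cast; ring)
  have hEB : HasDerivAt (fun ζ : ℝ => Real.exp (-((R * ζ + v * t) / (2 * s)) ^ 2))
      (Real.exp (-((R * z + v * t) / (2 * s)) ^ 2) *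
        (-(2 * ((R * z + v * t) / (2 * s)) * (R / (2 * s))))) z := by
    have := (((h2 z).pow 2).neg).exp
    exact this.congr_deriv (by simp only [Pi.neg_apply, Pi.pow_apply]; push_cast; ring)
  have hg2 : HasDerivAt (fun ζ =>
      C0 / 2 *
        (-(2 / Real.sqrt Real.pi * Real.exp (-((R * ζ - v * t) / (2 * s)) ^ 2)) * (R / (2 * s)) +
          (Real.exp (v * ζ / D) * (v / D) * erfc ((R * ζ + v * t) / (2 * s)) +
            Real.exp (v * ζ / D) *
              (-(2 / Real.sqrt Real.pi * Real.exp (-((R * ζ + v * t) / (2 * s)) ^ 2)) *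
                (R / (2 * s))))))
      (C0 / 2 *
        (2 * (2 / Real.sqrt Real.pi) * ((R * z - v * t) / (2 * s)) *
            Real.exp (-((R * z - v * t) / (2 * s)) ^ 2) * (R / (2 * s)) ^ 2 +
          Real.exp (v * z / D) * (v / D) ^ 2 * erfc ((R * z + v * t) / (2 * s)) -
          2 * (2 / Real.sqrt Real.pi) * Real.exp (v * z / D) *
            Real.exp (-((R * z + v * t) / (2 * s)) ^ 2) * (v / D) * (R / (2 * s)) +
          2 * (2 / Real.sqrt Real.pi) * ((R * z + v * t) / (2 * s)) * Real.exp (v * z / D) *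
            Real.exp (-((R * z + v * t) / (2 * s)) ^ 2) * (R / (2 * s)) ^ 2)) z := by
    have hP1 := ((hEA.const_mul (2 / Real.sqrt Real.pi)).neg).mul_const (R / (2 * s))
    have hP2 := ((hE z).mul_const (v / D)).mul (hB z)
    have hP3 := (hE z).mul (((hEB.const_mul (2 / Real.sqrt Real.pi)).neg).mul_const (R / (2 * s)))
    have h := (hP1.add (hP2.add hP3)).const_mul (C0 / 2)
    exact h.congr_deriv (by simp only [Pi.neg_apply]; ring)
  -- time derivative at t
  have hsd : HasDerivAt (fun τ : ℝ => Real.sqrt (R * D * τ)) (1 / (2 * s) * (R * D)) t := by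
    have h0 : HasDerivAt (fun τ : ℝ => R * D * τ) (R * D) t := by
      have := (hasDerivAt_id' (𝕜 := ℝ) (x := t)).const_mul (R * D)
      exact this.congr_deriv (by ring)
    exact (Real.hasDerivAt_sqrt hDt.ne').comp t h0
  have hne : (2 : ℝ) * Real.sqrt (R * D * t) ≠ 0 := by positivity
  have hAt : HasDerivAt (fun τ : ℝ => (R * z - v * τ) / (2 * Real.sqrt (R * D * τ)))
      ((-v * (2 * s) - (R * z - v * t) * (2 * (1 / (2 * s) * (R * D)))) / (2 * s) ^ 2) t := by
    have hnum : HasDerivAt (fun τ : ℝ => R * z - v * τ) (-v) t := by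
      have := ((hasDerivAt_id' (𝕜 := ℝ) (x := t)).const_mul v).const_sub (R * z)
      exact this.congr_deriv (by ring)
    exact hnum.div (hsd.const_mul 2) hne
  have hBt : HasDerivAt (fun τ : ℝ => (R * z + v * τ) / (2 * Real.sqrt (R * D * τ)))
      ((v * (2 * s) - (R * z + v * t) * (2 * (1 / (2 * s) * (R * D)))) / (2 * s) ^ 2) t := by
    have hnum : HasDerivAt (fun τ : ℝ => R * z + v * τ) v t := by
      have := ((hasDerivAt_id' (𝕜 := ℝ) (x := t)).const_mul v).const_add (R * z)
      exact this.congr_deriv (by ring)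
    exact hnum.div (hsd.const_mul 2) hne
  have hfun_t : (fun τ => C z τ) = fun τ => C0 / 2 *
      (erfc ((R * z - v * τ) / (2 * Real.sqrt (R * D * τ))) +
        Real.exp (v * z / D) * erfc ((R * z + v * τ) / (2 * Real.sqrt (R * D * τ)))) := by
    funext τ; rw [hC z τ]
  have htd : HasDerivAt (fun τ => C z τ)
      (C0 / 2 *
        (-(2 / Real.sqrt Real.pi * Real.exp (-((R * z - v * t) / (2 * s)) ^ 2)) *
            ((-v * (2 * s) - (R * z - v * t) * (2 * (1 / (2 * s) * (R * D)))) / (2 * s) ^ 2) +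
          Real.exp (v * z / D) *
            (-(2 / Real.sqrt Real.pi * Real.exp (-((R * z + v * t) / (2 * s)) ^ 2)) *
              ((v * (2 * s) - (R * z + v * t) * (2 * (1 / (2 * s) * (R * D)))) / (2 * s) ^ 2)))) t := by
    rw [hfun_t]
    exact (((hasDerivAt_erfc _).comp t hAt).add
      (((hasDerivAt_erfc _).comp t hBt).const_mul (Real.exp (v * z / D)))).const_mul (C0 / 2)
  rw [htd.deriv, hEq, hg2.deriv, (hg z).deriv]
  have hpi : Real.sqrt Real.pi ≠ 0 := by positivity
  have hEb : Real.exp (-((R * z + v * t) / (2 * s)) ^ 2) =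
      Real.exp (-((R * z - v * t) / (2 * s)) ^ 2) / Real.exp (v * z / D) := by
    rw [eq_div_iff (Real.exp_ne_zero _), ← Real.exp_add]
    congr 1
    have hts : t = s ^ 2 / (R * D) := by rw [hs2]; field_simp
    rw [hts]; field_simp; ring
  have hts : t = s ^ 2 / (R * D) := by rw [hs2]; field_simp
  rw [hEb, hts]
  field_simp
  ring
end

section
/- For the Ogata–Banks solution C(z,t) with D, R, C0 > 0 and v > 0, the initial condition holds: for every fixed z > 0, lim_{t→0⁺} C(z,t) = 0. -/
open Filter Set MeasureTheory

/-- The Ogata–Banks analytical solution of the advection–diffusion–retardation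
equation. -/
noncomputable def ogataBanks (C0 v D R z t : ℝ) : ℝ :=
  (C0 / 2) * (erfc ((R * z - v * t) / (2 * Real.sqrt (R * D * t))) +
    Real.exp (v * z / D) * erfc ((R * z + v * t) / (2 * Real.sqrt (R * D * t))))

lemma erfc_tendsto_atTop : Tendsto erfc atTop (nhds 0) := by
  have hint : Integrable (fun s : ℝ => Real.exp (-s ^ 2)) := by
    simpa using integrable_exp_neg_mul_sq (one_pos)
  have h : Tendsto (fun x : ℝ => ∫ s in Set.Ioi x, Real.exp (-s ^ 2)) atTop (nhds 0) := by
    have := tendsto_setIntegral_of_antitone (f := fun s : ℝ => Real.exp (-s ^ 2))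
      (μ := volume) (s := fun x : ℝ => Set.Ioi x)
      (fun i => measurableSet_Ioi) (fun a b hab => Ioi_subset_Ioi hab)
      ⟨0, hint.integrableOn⟩
    have he : (⋂ n : ℝ, Set.Ioi n) = (∅ : Set ℝ) := by
      ext x; simp only [mem_iInter, mem_Ioi, mem_empty_iff_false, iff_false, not_forall, not_lt]
      exact ⟨x, le_refl x⟩
    rwa [he, MeasureTheory.setIntegral_empty] at this
  have := h.const_mul (2 / Real.sqrt Real.pi)
  simp only [mul_zero] at this
  exact this

/-- Initial condition: for each fixed `z > 0`, `C(z,t) → 0` as `t → 0⁺`. -/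
theorem ogata_banks_initial_condition (C0 v D R : ℝ)
    (hC0 : 0 < C0) (hv : 0 < v) (hD : 0 < D) (hR : 0 < R) :
    ∀ z : ℝ, 0 < z →
      Filter.Tendsto (fun t => ogataBanks C0 v D R z t)
        (nhdsWithin 0 (Set.Ioi 0)) (nhds 0) := by
  intro z hz
  -- denominator tends to 0 within positives
  have hden : Tendsto (fun t : ℝ => 2 * Real.sqrt (R * D * t))
      (nhdsWithin 0 (Set.Ioi 0)) (nhdsWithin 0 (Set.Ioi 0)) := by
    apply tendsto_nhdsWithin_of_tendsto_nhds_of_eventually_within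
    · have hc : Continuous (fun t : ℝ => 2 * Real.sqrt (R * D * t)) := by continuity
      have := hc.tendsto 0
      simp only [mul_zero, Real.sqrt_zero] at this
      exact this.mono_left nhdsWithin_le_nhds
    · filter_upwards [self_mem_nhdsWithin] with t ht
      have hs : 0 < Real.sqrt (R * D * t) :=
        Real.sqrt_pos.mpr (by have := ht; simp only [Set.mem_Ioi] at this; positivity)
      exact Set.mem_Ioi.mpr (by linarith)
  have hinv : Tendsto (fun t : ℝ => (2 * Real.sqrt (R * D * t))⁻¹)
      (nhdsWithin 0 (Set.Ioi 0)) atTop :=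
    tendsto_inv_nhdsGT_zero.comp hden
  have harg : ∀ (c : ℝ), Tendsto (fun t : ℝ => (R * z + c * t))
      (nhdsWithin 0 (Set.Ioi 0)) (nhds (R * z)) := by
    intro c
    have : Tendsto (fun t : ℝ => R * z + c * t) (nhds 0) (nhds (R * z + c * 0)) := by
      exact (tendsto_const_nhds.add (tendsto_id.const_mul c))
    simpa using this.mono_left nhdsWithin_le_nhds
  have hRz : 0 < R * z := by positivity
  have h1 : Tendsto (fun t : ℝ => (R * z - v * t) / (2 * Real.sqrt (R * D * t)))
      (nhdsWithin 0 (Set.Ioi 0)) atTop := by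
    have := Filter.Tendsto.pos_mul_atTop hRz (by simpa [sub_eq_add_neg, neg_mul] using harg (-v)) hinv
    simpa [div_eq_mul_inv, sub_eq_add_neg] using this
  have h2 : Tendsto (fun t : ℝ => (R * z + v * t) / (2 * Real.sqrt (R * D * t)))
      (nhdsWithin 0 (Set.Ioi 0)) atTop := by
    have := Filter.Tendsto.pos_mul_atTop hRz (harg v) hinv
    simpa [div_eq_mul_inv] using this
  have e1 := erfc_tendsto_atTop.comp h1
  have e2 := erfc_tendsto_atTop.comp h2
  have := ((e1.add (e2.const_mul (Real.exp (v * z / D)))).const_mul (C0 / 2))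
  simpa [ogataBanks, Function.comp] using this
end

section
/- For all z ≥ 0, t > 0 and parameters C0 ≥ 0, D > 0, R > 0, v ≥ 0, the Ogata–Banks solution satisfies 0 ≤ C(z,t) ≤ C0. -/
open MeasureTheory Real Set

lemma gauss_integrable : MeasureTheory.Integrable (fun s : ℝ => Real.exp (-s ^ 2)) := by
  have := integrable_exp_neg_mul_sq (b := (1:ℝ)) one_pos
  simpa using this

lemma erfc_nonneg (x : ℝ) : 0 ≤ erfc x := by
  apply mul_nonneg
  · positivity
  · exact MeasureTheory.setIntegral_nonneg measurableSet_Ioi fun s _ => (Real.exp_pos _).le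

lemma erfc_add_neg (x : ℝ) : erfc (-x) + erfc x = 2 := by
  have h1 : (∫ s in Set.Ioi (-x), Real.exp (-s ^ 2)) = ∫ s in Set.Iic x, Real.exp (-s ^ 2) := by
    rw [show (-x) = -(x) by ring, ← integral_comp_neg_Iic]
    simp [neg_neg]
  have h2 : (∫ s in Set.Iic x, Real.exp (-s ^ 2)) + (∫ s in Set.Ioi x, Real.exp (-s ^ 2))
      = ∫ s : ℝ, Real.exp (-s ^ 2) := by
    exact intervalIntegral.integral_Iic_add_Ioi gauss_integrable.integrableOn
      gauss_integrable.integrableOn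
  have h3 : (∫ s : ℝ, Real.exp (-s ^ 2)) = Real.sqrt Real.pi := by
    have := integral_gaussian (1 : ℝ)
    simpa using this
  have hpi : Real.sqrt Real.pi ≠ 0 := by positivity
  unfold erfc
  rw [h1, ← mul_add, h2, h3]
  field_simp

/-- Key inequality: for `a, b ≥ 0`, `exp (4ab) * erfc (a + b) ≤ erfc (b - a)`. -/
lemma key_ineq {a b : ℝ} (ha : 0 ≤ a) (hb : 0 ≤ b) :
    Real.exp (4 * a * b) * erfc (a + b) ≤ erfc (b - a) := by
  unfold erfc
  rw [mul_left_comm]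
  apply mul_le_mul_of_nonneg_left _ (by positivity)
  rw [← MeasureTheory.integral_const_mul]
  -- LHS = ∫ s in Ioi (a+b), exp (4ab - s²)
  have hL : (∫ s in Set.Ioi (a + b), Real.exp (4 * a * b) * Real.exp (-s ^ 2))
      = ∫ u in Set.Ioi (b - a), Real.exp (4 * a * b) * Real.exp (-(u + 2 * a) ^ 2) := by
    have hemb : MeasurableEmbedding (fun x : ℝ => x + 2 * a) :=
      (Homeomorph.addRight (2 * a)).measurableEmbedding
    have := hemb.setIntegral_map (μ := volume)
      (fun u : ℝ => Real.exp (4 * a * b) * Real.exp (-u ^ 2)) (Set.Ioi (a + b))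
    rw [MeasureTheory.map_add_right_eq_self volume (2 * a)] at this
    have hset : (fun x : ℝ => x + 2 * a) ⁻¹' Set.Ioi (a + b) = Set.Ioi (b - a) := by
      ext x
      simp only [Set.mem_preimage, Set.mem_Ioi]
      constructor <;> intro h <;> linarith
    rw [this, hset]
  rw [hL]
  apply MeasureTheory.setIntegral_mono_on
  · have : MeasureTheory.Integrable (fun u : ℝ => Real.exp (-(u + 2 * a) ^ 2)) :=
      gauss_integrable.comp_add_right (2 * a)
    exact (this.const_mul _).integrableOn
  · exact gauss_integrable.integrableOn
  · exact measurableSet_Ioi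
  · intro u hu
    rw [Set.mem_Ioi] at hu
    rw [← Real.exp_add]
    apply Real.exp_le_exp.mpr
    nlinarith

/-- For `z ≥ 0`, `t > 0`, `C0 ≥ 0`, `D > 0`, `R > 0`, `v ≥ 0`, the Ogata–Banks
solution satisfies `0 ≤ C(z,t) ≤ C0`. -/
theorem ogata_banks_bounds (C0 v D R : ℝ)
    (hC0 : 0 ≤ C0) (hv : 0 ≤ v) (hD : 0 < D) (hR : 0 < R) :
    ∀ z t : ℝ, 0 ≤ z → 0 < t →
      0 ≤ ogataBanks C0 v D R z t ∧ ogataBanks C0 v D R z t ≤ C0 := by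
  intro z t hz ht
  set s := 2 * Real.sqrt (R * D * t) with hs
  have hsq : Real.sqrt (R * D * t) ^ 2 = R * D * t := by
    rw [Real.sq_sqrt]; positivity
  have hspos : 0 < s := by rw [hs]; positivity
  set a := R * z / s with ha
  set b := v * t / s with hb
  have ha0 : 0 ≤ a := by positivity
  have hb0 : 0 ≤ b := by positivity
  have hAm : (R * z - v * t) / s = a - b := by rw [ha, hb]; ring
  have hAp : (R * z + v * t) / s = a + b := by rw [ha, hb]; ring
  have hs2 : s * s = 4 * (R * D * t) := by rw [hs]; nlinarith [hsq]
  clear_value s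
  have hexp : v * z / D = 4 * a * b := by
    rw [ha, hb]
    field_simp
    rw [sq, hs2]; ring
  unfold ogataBanks
  rw [← hs, hAm, hAp, hexp]
  constructor
  · have h1 := erfc_nonneg (a - b)
    have h2 := mul_nonneg (Real.exp_pos (4 * a * b)).le (erfc_nonneg (a + b))
    apply mul_nonneg (by linarith)
    linarith
  · have hkey := key_ineq ha0 hb0
    have hsum : erfc (b - a) + erfc (a - b) = 2 := by
      have := erfc_add_neg (a - b)
      rw [show -(a - b) = b - a by ring] at this
      exact this
    nlinarith [erfc_nonneg (a - b), erfc_nonneg (a + b)]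
end
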